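/- Let ℏ₀ > 0, s > 0, let c = (c_k)_{k∈ℤ} be a finitely supported sequence of complex numbers, and let f' : ℝ/2πℤ → ℂ be integrable. Then the function (x,y) ↦ conj(Φ_s[c](x,y)) · f'(x) · e^{−sy²/(2ℏ₀)} is integrable on (ℝ/2πℤ) × ℝ with respect to (dx/2π)·dy, and √(s/2) · ∫_ℝ ∫_0^{2π} conj(Φ_s[c](x,y)) · f'(x) · e^{−sy²/(2ℏ₀)} (dx/2π) dy = √(πℏ₀) · Σ_{k∈ℤ} conj(c_k) · ((1/2π)∫_0^{2π} f'(x) e^{−ikx} dx). (This is the BKS pairing (33) between a Kähler polarized section and a vertically polarized section, and Hall's formula (35) ⟨σ_s, σ'_0⟩^{BKS} = a_{s/2}⟨f,f'⟩, in the abelian case K = U(1); with the rescaled inner product (36) on vertically polarized sections it gives the unitarity of B^Q_{s0}.) -/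

import Mathlib

open scoped Real BigOperators
open MeasureTheory

lemma conjA (k : ℤ) (x : ℝ) :
    (starRingEnd ℂ) (Complex.exp ((k:ℂ)*Complex.I*(x:ℂ))) =
      Complex.exp (-(k:ℂ)*Complex.I*(x:ℂ)) := by
  rw [← Complex.exp_conj]
  congr 1
  simp [map_mul, Complex.conj_ofReal, Complex.conj_I]

lemma conjB (s ℏ₀ : ℝ) (k : ℤ) :
    (starRingEnd ℂ) (Complex.exp (-((s:ℂ)*(ℏ₀:ℂ)*(k:ℂ)^2)/2)) =
      Complex.exp (-((s:ℂ)*(ℏ₀:ℂ)*(k:ℂ)^2)/2) := by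
  rw [← Complex.exp_conj]
  congr 1
  simp [map_div₀, map_mul, Complex.conj_ofReal, map_ofNat]

lemma conjC (s y : ℝ) (k : ℤ) :
    (starRingEnd ℂ) (Complex.exp (-((k:ℂ)*(s:ℂ)*(y:ℂ)))) =
      Complex.exp (-((k:ℂ)*(s:ℂ)*(y:ℂ))) := by
  rw [← Complex.exp_conj]
  congr 1
  simp [map_mul, Complex.conj_ofReal]

lemma hpt (s ℏ₀ y : ℝ) (k : ℤ) :
    (starRingEnd ℂ) (Complex.exp (-((k:ℂ)*(s:ℂ)*(y:ℂ)))) *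
      (Real.exp (-(s * y ^ 2) / (2 * ℏ₀)) : ℂ) =
      Complex.exp (((-(s/(2*ℏ₀)) : ℝ) : ℂ) * (y:ℂ)^2 + (-((k:ℂ)*(s:ℂ))) * (y:ℂ) + 0) := by
  rw [conjC, Complex.ofReal_exp, ← Complex.exp_add]
  congr 1
  push_cast
  ring

/-- The `J_s`-holomorphic function `(C_{sℏ₀}f) ∘ ψ_s` on `T*U(1) ≅ (ℝ/2πℤ) × ℝ`,
where `f ∈ L²(S¹)` has Fourier coefficients `c_k`:
`Φ_s[c](x,y) = Σ_{k∈ℤ} c_k e^{−sℏ₀k²/2} e^{ikx} e^{−ksy}`. -/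
noncomputable def Phi (ℏ₀ s : ℝ) (c : ℤ → ℂ) (x y : ℝ) : ℂ :=
  ∑' k : ℤ, c k * Complex.exp (-((s : ℂ) * (ℏ₀ : ℂ) * (k : ℂ) ^ 2) / 2) *
    Complex.exp ((k : ℂ) * Complex.I * (x : ℂ)) * Complex.exp (-((k : ℂ) * (s : ℂ) * (y : ℂ)))

/-- The BKS pairing (33) between a Kähler polarized section and a vertically polarized
section, and Hall's formula (35) `⟨σ_s, σ'_0⟩^{BKS} = a_{s/2} ⟨f, f'⟩`, in the abelian
case `K = U(1)`. -/
theorem statement_5 {ℏ₀ s : ℝ} (hℏ : 0 < ℏ₀) (hs : 0 < s)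
    (c : ℤ → ℂ) (hc : (Function.support c).Finite)
    (f' : ℝ → ℂ) (hper : Function.Periodic f' (2 * π))
    (hf' : IntegrableOn f' (Set.Ioc 0 (2 * π))) :
    Integrable
      (fun p : ℝ × ℝ =>
        (starRingEnd ℂ) (Phi ℏ₀ s c p.1 p.2) * f' p.1 *
          (Real.exp (-(s * p.2 ^ 2) / (2 * ℏ₀)) : ℂ))
      ((volume.restrict (Set.Ioc 0 (2 * π))).prod volume) ∧
    (Real.sqrt (s / 2) : ℂ) *
        ∫ y : ℝ, (∫ x in Set.Ioc (0 : ℝ) (2 * π),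
          (starRingEnd ℂ) (Phi ℏ₀ s c x y) * f' x *
            (Real.exp (-(s * y ^ 2) / (2 * ℏ₀)) : ℂ)) / (2 * (π : ℂ)) =
      (Real.sqrt (π * ℏ₀) : ℂ) *
        ∑' k : ℤ, (starRingEnd ℂ) (c k) *
          ((1 / (2 * (π : ℂ))) * ∫ x in Set.Ioc (0 : ℝ) (2 * π),
            f' x * Complex.exp (-(k : ℂ) * Complex.I * (x : ℂ))) := by
  classical
  have hπ : (0:ℝ) < π := Real.pi_pos
  set F : Finset ℤ := hc.toFinset with hFdef
  set E1 : ℤ → ℂ := fun k => Complex.exp (-((s:ℂ)*(ℏ₀:ℂ)*(k:ℂ)^2)/2) with hE1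
  set g : ℤ → ℝ → ℂ := fun k x =>
    (starRingEnd ℂ) (c k * E1 k * Complex.exp ((k:ℂ)*Complex.I*(x:ℂ))) * f' x with hgdef
  set h : ℤ → ℝ → ℂ := fun k y =>
    (starRingEnd ℂ) (Complex.exp (-((k:ℂ)*(s:ℂ)*(y:ℂ)))) *
      (Real.exp (-(s*y^2)/(2*ℏ₀)) : ℂ) with hhdef
  have hb : ((-(s/(2*ℏ₀)) : ℝ) : ℂ).re < 0 := by
    rw [Complex.ofReal_re]
    have : 0 < s/(2*ℏ₀) := by positivity
    linarith
  have hPhi : ∀ x y : ℝ, Phi ℏ₀ s c x y =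
      ∑ k ∈ F, c k * E1 k * Complex.exp ((k:ℂ)*Complex.I*(x:ℂ)) *
        Complex.exp (-((k:ℂ)*(s:ℂ)*(y:ℂ))) := by
    intro x y
    refine tsum_eq_sum fun k hk => ?_
    have : c k = 0 := Function.notMem_support.mp (by simpa [hFdef, Set.Finite.mem_toFinset] using hk)
    simp [this]
  have key : ∀ x y : ℝ,
      (starRingEnd ℂ) (Phi ℏ₀ s c x y) * f' x * (Real.exp (-(s*y^2)/(2*ℏ₀)) : ℂ) =
        ∑ k ∈ F, g k x * h k y := by
    intro x y
    rw [hPhi, map_sum, Finset.sum_mul, Finset.sum_mul]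
    refine Finset.sum_congr rfl fun k _ => ?_
    simp only [hgdef, hhdef, map_mul]
    ring
  have hgInt : ∀ k : ℤ, Integrable (g k) (volume.restrict (Set.Ioc 0 (2*π))) := by
    intro k
    refine hf'.bdd_mul (c := ‖c k * E1 k‖) ?_ (ae_of_all _ fun x => ?_)
    · refine Continuous.aestronglyMeasurable ?_
      exact Complex.continuous_conj.comp (by fun_prop)
    · rw [map_mul]
      rw [norm_mul]
      have h1 : ‖(starRingEnd ℂ) (Complex.exp ((k:ℂ)*Complex.I*(x:ℂ)))‖ = 1 := by
        rw [RCLike.norm_conj]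
        rw [show (k:ℂ)*Complex.I*(x:ℂ) = ((k*x : ℝ) : ℂ)*Complex.I by push_cast; ring]
        exact Complex.norm_exp_ofReal_mul_I _
      rw [h1, mul_one, RCLike.norm_conj]
  have hhInt : ∀ k : ℤ, Integrable (h k) volume := by
    intro k
    refine (integrable_cexp_quadratic' hb (-((k:ℂ)*(s:ℂ))) 0).congr ?_
    exact ae_of_all _ fun y => (hpt s ℏ₀ y k).symm
  have hintk : ∀ k : ℤ, Integrable (fun p : ℝ × ℝ => g k p.1 * h k p.2)
      ((volume.restrict (Set.Ioc 0 (2*π))).prod volume) := fun k =>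
    (hgInt k).mul_prod (hhInt k)
  constructor
  · refine (integrable_finset_sum F fun k _ => hintk k).congr ?_
    exact ae_of_all _ fun p => (key p.1 p.2).symm
  · set J : ℤ → ℂ := fun k => ∫ x in Set.Ioc (0:ℝ) (2*π),
      f' x * Complex.exp (-(k:ℂ)*Complex.I*(x:ℂ)) with hJ
    -- inner x-integral
    have hinner : ∀ y : ℝ, (∫ x in Set.Ioc (0:ℝ) (2*π),
        (starRingEnd ℂ) (Phi ℏ₀ s c x y) * f' x * (Real.exp (-(s*y^2)/(2*ℏ₀)) : ℂ)) =
        ∑ k ∈ F, ((starRingEnd ℂ) (c k) * E1 k * J k) * h k y := by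
      intro y
      have e1 : (∫ x in Set.Ioc (0:ℝ) (2*π),
          (starRingEnd ℂ) (Phi ℏ₀ s c x y) * f' x * (Real.exp (-(s*y^2)/(2*ℏ₀)) : ℂ)) =
          ∫ x in Set.Ioc (0:ℝ) (2*π), ∑ k ∈ F, g k x * h k y := by
        congr 1
        exact funext fun x => key x y
      rw [e1, integral_finset_sum F (fun k _ => (hgInt k).mul_const (h k y))]
      refine Finset.sum_congr rfl fun k _ => ?_
      rw [integral_mul_const]
      congr 1
      have e2 : (fun x => g k x) = fun x =>
          ((starRingEnd ℂ) (c k) * E1 k) * (f' x * Complex.exp (-(k:ℂ)*Complex.I*(x:ℂ))) := by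
        funext x
        simp only [hgdef, map_mul, conjA, conjB, hE1]
        ring
      calc (∫ x in Set.Ioc (0:ℝ) (2*π), g k x)
          = ∫ x in Set.Ioc (0:ℝ) (2*π),
            ((starRingEnd ℂ) (c k) * E1 k) * (f' x * Complex.exp (-(k:ℂ)*Complex.I*(x:ℂ))) := by
            rw [e2]
        _ = ((starRingEnd ℂ) (c k) * E1 k) * J k := by rw [integral_const_mul]
    -- y-integral of each h k
    have hval : ∀ k : ℤ, (∫ y : ℝ, h k y) =
        ((Real.sqrt (2*π*ℏ₀/s) : ℝ) : ℂ) * Complex.exp (((k:ℂ)^2*(s:ℂ)*(ℏ₀:ℂ))/2) := by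
      intro k
      have e3 : (fun y : ℝ => h k y) = fun y : ℝ =>
          Complex.exp (((-(s/(2*ℏ₀)) : ℝ) : ℂ) * (y:ℂ)^2 + (-((k:ℂ)*(s:ℂ))) * (y:ℂ) + 0) :=
        funext fun y => hpt s ℏ₀ y k
      rw [e3, integral_cexp_quadratic hb]
      have hs0 : (s:ℂ) ≠ 0 := by exact_mod_cast hs.ne'
      have hh0 : (ℏ₀:ℂ) ≠ 0 := by exact_mod_cast hℏ.ne'
      congr 1
      · have h1 : (π : ℂ) / -(((-(s/(2*ℏ₀)) : ℝ)) : ℂ) = ((2*π*ℏ₀/s : ℝ) : ℂ) := by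
          push_cast
          field_simp
        rw [h1, show (1/2 : ℂ) = ((1/2 : ℝ) : ℂ) by norm_num,
          ← Complex.ofReal_cpow (by positivity), Real.sqrt_eq_rpow]
      · congr 1
        push_cast
        field_simp
        ring
    -- assemble
    have hIy : ∀ k : ℤ, Integrable
        (fun y : ℝ => ((starRingEnd ℂ) (c k) * E1 k * J k) * h k y / (2*(π:ℂ))) volume := by
      intro k
      exact (((hhInt k).const_mul _).div_const _)
    calc (Real.sqrt (s / 2) : ℂ) *
        ∫ y : ℝ, (∫ x in Set.Ioc (0 : ℝ) (2 * π),
          (starRingEnd ℂ) (Phi ℏ₀ s c x y) * f' x *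
            (Real.exp (-(s * y ^ 2) / (2 * ℏ₀)) : ℂ)) / (2 * (π : ℂ))
        = (Real.sqrt (s / 2) : ℂ) *
          ∫ y : ℝ, ∑ k ∈ F, ((starRingEnd ℂ) (c k) * E1 k * J k) * h k y / (2*(π:ℂ)) := by
          congr 1
          refine integral_congr_ae (ae_of_all _ fun y => ?_)
          simp only []
          rw [hinner y, Finset.sum_div]
      _ = (Real.sqrt (s / 2) : ℂ) *
          ∑ k ∈ F, ((starRingEnd ℂ) (c k) * E1 k * J k) * (∫ y : ℝ, h k y) / (2*(π:ℂ)) := by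
          rw [integral_finset_sum F fun k _ => hIy k]
          congr 1
          refine Finset.sum_congr rfl fun k _ => ?_
          simp_rw [mul_div_assoc, integral_const_mul, integral_div]
      _ = (Real.sqrt (π * ℏ₀) : ℂ) * ∑ k ∈ F, (starRingEnd ℂ) (c k) *
            ((1 / (2 * (π : ℂ))) * J k) := by
          rw [Finset.mul_sum, Finset.mul_sum]
          refine Finset.sum_congr rfl fun k _ => ?_
          rw [hval k]
          have hE : E1 k * Complex.exp (((k:ℂ)^2*(s:ℂ)*(ℏ₀:ℂ))/2) = 1 := by
            rw [hE1, ← Complex.exp_add]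
            rw [show -((s:ℂ)*(ℏ₀:ℂ)*(k:ℂ)^2)/2 + ((k:ℂ)^2*(s:ℂ)*(ℏ₀:ℂ))/2 = 0 by ring]
            exact Complex.exp_zero
          have hP : (Real.sqrt (s/2) : ℂ) * (Real.sqrt (2*π*ℏ₀/s) : ℂ) =
              (Real.sqrt (π*ℏ₀) : ℂ) := by
            rw [← Complex.ofReal_mul, ← Real.sqrt_mul (by positivity)]
            congr 2
            field_simp
          linear_combination ((starRingEnd ℂ) (c k) * E1 k * J k *
              Complex.exp (((k:ℂ)^2*(s:ℂ)*(ℏ₀:ℂ))/2) / (2*(π:ℂ))) * hP +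
            ((Real.sqrt (π*ℏ₀) : ℂ) * (starRingEnd ℂ) (c k) * J k / (2*(π:ℂ))) * hE
      _ = (Real.sqrt (π * ℏ₀) : ℂ) *
          ∑' k : ℤ, (starRingEnd ℂ) (c k) * ((1 / (2 * (π : ℂ))) * J k) := by
          congr 1
          refine (tsum_eq_sum fun k hk => ?_).symm
          have : c k = 0 := Function.notMem_support.mp
            (by simpa [hFdef, Set.Finite.mem_toFinset] using hk)
          simp [this]
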